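/- (Conditional uniformity of the oracle weighted rank.) Let $z_1,\dots,z_{n+1}$ be fixed points with positive weights $w_1,\dots,w_{n+1}$ and real scores $v_1,\dots,v_{n+1}$. Let $I$ be a random index with $\mathbb{P}(I = i) = w_i / \sum_j w_j$, and let $U\sim\mathrm{Unif}[0,1]$ be independent of $I$. Define $p^* = \frac{\sum_{i} w_i \mathbf{1}\{v_i < v_I\} + U\,(\sum_i w_i \mathbf{1}\{v_i = v_I\})}{\sum_i w_i}$. Then $p^* \sim \mathrm{Unif}[0,1]$. -/

import Mathlib

open MeasureTheory ProbabilityTheory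
open scoped Classical

private lemma clamp_eq (a b s : ℝ) (hb : 0 < b) :
    min (max ((s - a) / b) 0) 1 = (min s (a + b) - min s a) / b := by
  rcases le_total s a with h | h
  · rw [max_eq_right (show (s - a) / b ≤ 0 from
        div_nonpos_of_nonpos_of_nonneg (by linarith) hb.le),
      min_eq_left (show (0:ℝ) ≤ 1 from zero_le_one),
      min_eq_left h, min_eq_left (show s ≤ a + b by linarith), sub_self, zero_div]
  · rcases le_total (a + b) s with h2 | h2
    · rw [max_eq_left (show (0:ℝ) ≤ (s - a) / b from div_nonneg (by linarith) hb.le),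
        min_eq_right (show (1:ℝ) ≤ (s - a) / b from (one_le_div hb).2 (by linarith)),
        min_eq_right h2, min_eq_right h]
      field_simp
      ring
    · rw [max_eq_left (show (0:ℝ) ≤ (s - a) / b from div_nonneg (by linarith) hb.le),
        min_eq_left (show (s - a) / b ≤ 1 from by rw [div_le_one hb]; linarith),
        min_eq_left h2, min_eq_right h]

private lemma tele {n : ℕ} (w : Fin (n + 1) → ℝ) (hw : ∀ i, 0 < w i) (v : Fin (n + 1) → ℝ)
    (s : ℝ) (S : Finset (Fin (n + 1))) :
    ∑ i ∈ S, (w i / (∑ j ∈ S, w j * (if v j = v i then 1 else 0))) *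
        (min s (∑ j ∈ S, w j * (if v j ≤ v i then 1 else 0)) -
         min s (∑ j ∈ S, w j * (if v j < v i then 1 else 0)))
      = min s (∑ j ∈ S, w j) - min s 0 := by
  induction S using Finset.strongInduction with
  | _ S ih =>
    rcases S.eq_empty_or_nonempty with rfl | hS
    · simp
    have hT : (S.image v).Nonempty := hS.image v
    set x₀ := (S.image v).max' hT with hx₀def
    have hmax : ∀ j ∈ S, v j ≤ x₀ := fun j hj =>
      Finset.le_max' _ _ (Finset.mem_image_of_mem v hj)
    obtain ⟨i₀, hi₀S, hi₀⟩ := Finset.mem_image.1 ((S.image v).max'_mem hT)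
    set S' := S.filter (fun i => ¬ (v i = x₀)) with hS'def
    set S₀ := S.filter (fun i => v i = x₀) with hS₀def
    have hS'sub : S' ⊂ S := by
      rw [hS'def, Finset.filter_ssubset]
      exact ⟨i₀, hi₀S, by simp [hi₀, hx₀def]⟩
    -- membership facts
    have hmemS' : ∀ i, i ∈ S' ↔ (i ∈ S ∧ v i ≠ x₀) := by
      intro i; rw [hS'def, Finset.mem_filter]
    have hltS' : ∀ i ∈ S', v i < x₀ := fun i hi =>
      lt_of_le_of_ne (hmax i ((hmemS' i).1 hi).1) ((hmemS' i).1 hi).2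
    -- inner sums restrict to S' for i ∈ S'
    have hinner : ∀ (p : Fin (n+1) → Prop) (hp : ∀ j, p j → v j ≠ x₀),
        ∑ j ∈ S, w j * (if p j then 1 else 0) = ∑ j ∈ S', w j * (if p j then 1 else 0) := by
      intro p hp
      refine (Finset.sum_subset (Finset.filter_subset _ _) ?_).symm
      intro j hjS hjS'
      have : v j = x₀ := by
        by_contra hne
        exact hjS' ((hmemS' j).2 ⟨hjS, hne⟩)
      rw [if_neg (fun hpj => hp j hpj this), mul_zero]
    -- split sum
    rw [← Finset.sum_filter_add_sum_filter_not S (fun i => v i = x₀), ← hS'def, ← hS₀def]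
    -- S₀ part
    have hWeq : ∑ j ∈ S, w j * (if v j = x₀ then 1 else 0) = ∑ j ∈ S₀, w j := by
      rw [hS₀def, Finset.sum_filter]
      exact Finset.sum_congr rfl (fun j hj => by rcases em (v j = x₀) with h | h <;> simp [h])
    have hB : 0 < ∑ j ∈ S₀, w j := by
      apply Finset.sum_pos (fun j _ => hw j)
      exact ⟨i₀, by rw [hS₀def, Finset.mem_filter]; exact ⟨hi₀S, hi₀⟩⟩
    have hle : ∑ j ∈ S, w j * (if v j ≤ x₀ then 1 else 0) = ∑ j ∈ S, w j :=
      Finset.sum_congr rfl (fun j hj => by rw [if_pos (hmax j hj), mul_one])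
    have hlt : ∑ j ∈ S, w j * (if v j < x₀ then 1 else 0) = ∑ j ∈ S', w j := by
      rw [hS'def, Finset.sum_filter]
      refine Finset.sum_congr rfl (fun j hj => ?_)
      rcases em (v j = x₀) with h | h
      · simp [h]
      · simp [h, lt_of_le_of_ne (hmax j hj) h]
    have hS₀sum : ∑ i ∈ S₀, (w i / (∑ j ∈ S, w j * (if v j = v i then 1 else 0))) *
        (min s (∑ j ∈ S, w j * (if v j ≤ v i then 1 else 0)) -
         min s (∑ j ∈ S, w j * (if v j < v i then 1 else 0)))
        = min s (∑ j ∈ S, w j) - min s (∑ j ∈ S', w j) := by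
      have : ∀ i ∈ S₀, (w i / (∑ j ∈ S, w j * (if v j = v i then 1 else 0))) *
        (min s (∑ j ∈ S, w j * (if v j ≤ v i then 1 else 0)) -
         min s (∑ j ∈ S, w j * (if v j < v i then 1 else 0)))
          = (w i / ∑ j ∈ S₀, w j) * (min s (∑ j ∈ S, w j) - min s (∑ j ∈ S', w j)) := by
        intro i hi
        have hvi : v i = x₀ := (Finset.mem_filter.1 hi).2
        rw [hvi, hWeq, hle, hlt]
      rw [Finset.sum_congr rfl this, ← Finset.sum_mul, ← Finset.sum_div, div_self hB.ne',
        one_mul]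
    -- S' part
    have hS'sum : ∑ i ∈ S', (w i / (∑ j ∈ S, w j * (if v j = v i then 1 else 0))) *
        (min s (∑ j ∈ S, w j * (if v j ≤ v i then 1 else 0)) -
         min s (∑ j ∈ S, w j * (if v j < v i then 1 else 0)))
        = min s (∑ j ∈ S', w j) - min s 0 := by
      have hcongr : ∀ i ∈ S', (w i / (∑ j ∈ S, w j * (if v j = v i then 1 else 0))) *
        (min s (∑ j ∈ S, w j * (if v j ≤ v i then 1 else 0)) -
         min s (∑ j ∈ S, w j * (if v j < v i then 1 else 0)))
          = (w i / (∑ j ∈ S', w j * (if v j = v i then 1 else 0))) *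
        (min s (∑ j ∈ S', w j * (if v j ≤ v i then 1 else 0)) -
         min s (∑ j ∈ S', w j * (if v j < v i then 1 else 0))) := by
        intro i hi
        have hvi : v i < x₀ := hltS' i hi
        rw [hinner (fun j => v j = v i) (fun j hj => by rw [hj]; exact hvi.ne),
          hinner (fun j => v j ≤ v i) (fun j hj => by
            intro he; have hj' : v j ≤ v i := hj; rw [he] at hj'
            exact absurd hj' (not_le.2 hvi)),
          hinner (fun j => v j < v i) (fun j hj => by
            intro he; have hj' : v j < v i := hj; rw [he] at hj'
            exact absurd hj' (not_lt.2 hvi.le))]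
      rw [Finset.sum_congr rfl hcongr]
      exact ih S' hS'sub
    rw [hS₀sum, hS'sum]
    ring

theorem stmt5 {Ω : Type*} [MeasurableSpace Ω] (P : Measure Ω) [IsProbabilityMeasure P]
    (n : ℕ) (w : Fin (n + 1) → ℝ) (hw : ∀ i, 0 < w i) (v : Fin (n + 1) → ℝ)
    (I : Ω → Fin (n + 1)) (hI : Measurable I)
    (hIlaw : ∀ i, P {ω | I ω = i} = ENNReal.ofReal (w i / ∑ j, w j))
    (U : Ω → ℝ) (hU : Measurable U)
    (hUlaw : Measure.map U P = volume.restrict (Set.Icc 0 1))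
    (hindep : IndepFun I U P) :
    Measure.map (fun ω =>
        ((∑ i, w i * (if v i < v (I ω) then 1 else 0)) +
          U ω * (∑ i, w i * (if v i = v (I ω) then 1 else 0))) / (∑ i, w i)) P =
      volume.restrict (Set.Icc 0 1) := by
  set W : ℝ := ∑ i, w i with hWdef
  have hW : 0 < W := Finset.sum_pos (fun i _ => hw i) Finset.univ_nonempty
  set a : Fin (n + 1) → ℝ := fun i => ∑ j, w j * (if v j < v i then 1 else 0) with ha
  set b : Fin (n + 1) → ℝ := fun i => ∑ j, w j * (if v j = v i then 1 else 0) with hb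
  have hbpos : ∀ i, 0 < b i := by
    intro i
    rw [hb]
    refine Finset.sum_pos' (fun j _ => mul_nonneg (hw j).le (by split <;> norm_num))
      ⟨i, Finset.mem_univ i, ?_⟩
    simp [hw i]
  set f : Ω → ℝ := fun ω => (a (I ω) + U ω * b (I ω)) / W with hf
  have hfm : Measurable f := by
    apply Measurable.div_const
    exact ((measurable_of_countable a).comp hI).add
      (hU.mul ((measurable_of_countable b).comp hI))
  haveI : IsProbabilityMeasure (Measure.map f P) := Measure.isProbabilityMeasure_map hfm.aemeasurable
  -- volume of Iic ∩ Icc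
  have hvol : ∀ c : ℝ, volume (Set.Iic c ∩ Set.Icc (0:ℝ) 1) = ENNReal.ofReal (min c 1) := by
    intro c
    have : Set.Iic c ∩ Set.Icc (0:ℝ) 1 = Set.Icc 0 (min c 1) := by
      ext x
      simp only [Set.mem_inter_iff, Set.mem_Iic, Set.mem_Icc, le_min_iff]
      tauto
    rw [this, Real.volume_Icc, sub_zero]
  refine MeasureTheory.Measure.ext_of_Iic _ _ (fun t => ?_)
  rw [Measure.map_apply hfm measurableSet_Iic, Measure.restrict_apply measurableSet_Iic, hvol]
  set s : ℝ := t * W with hs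
  set c : Fin (n + 1) → ℝ := fun i => (s - a i) / b i with hc
  have hpre : f ⁻¹' Set.Iic t = ⋃ i, (I ⁻¹' {i} ∩ U ⁻¹' Set.Iic (c i)) := by
    ext ω
    simp only [Set.mem_preimage, Set.mem_Iic, Set.mem_iUnion, Set.mem_inter_iff,
      Set.mem_singleton_iff]
    have h1 : f ω ≤ t ↔ U ω ≤ c (I ω) := by
      rw [hf, hc]
      rw [div_le_iff₀ hW, ← hs, ← le_sub_iff_add_le', ← le_div_iff₀ (hbpos (I ω))]
    constructor
    · intro h; exact ⟨I ω, rfl, h1.1 h⟩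
    · rintro ⟨i, hi, h⟩; rw [h1, hi]; exact h
  rw [hpre, measure_iUnion ?_ (fun i => (hI (measurableSet_singleton i)).inter
    (hU measurableSet_Iic))]
  swap
  · intro i j hij
    refine Set.disjoint_left.2 ?_
    rintro ω ⟨h1, -⟩ ⟨h2, -⟩
    exact hij ((Set.mem_singleton_iff.1 h1).symm.trans (Set.mem_singleton_iff.1 h2))
  rw [tsum_fintype]
  have hterm : ∀ i, P (I ⁻¹' {i} ∩ U ⁻¹' Set.Iic (c i))
      = ENNReal.ofReal ((w i / W) * min (max (c i) 0) 1) := by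
    intro i
    rw [hindep.measure_inter_preimage_eq_mul _ _ (measurableSet_singleton i) measurableSet_Iic]
    have hIi : I ⁻¹' {i} = {ω | I ω = i} := by
      ext ω; simp [Set.mem_preimage]
    have hUc : P (U ⁻¹' Set.Iic (c i)) = ENNReal.ofReal (min (c i) 1) := by
      rw [← Measure.map_apply hU measurableSet_Iic, hUlaw,
        Measure.restrict_apply measurableSet_Iic, hvol]
    rw [hIi, hIlaw i, hUc]
    have hmm : ENNReal.ofReal (min (c i) 1) = ENNReal.ofReal (min (max (c i) 0) 1) := by
      rcases le_total 0 (c i) with h | h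
      · rw [max_eq_left h]
      · rw [max_eq_right h, min_eq_left (show (0:ℝ) ≤ 1 from zero_le_one),
          min_eq_left (show c i ≤ 1 by linarith), ENNReal.ofReal_of_nonpos h,
          ENNReal.ofReal_zero]
    rw [hmm, ← ENNReal.ofReal_mul (div_nonneg (hw i).le hW.le)]
  rw [Finset.sum_congr rfl (fun i _ => hterm i),
    ← ENNReal.ofReal_sum_of_nonneg (fun i _ => mul_nonneg (div_nonneg (hw i).le hW.le)
      (le_min (le_max_right _ _) zero_le_one))]
  -- the real identity
  have hab : ∀ i, (∑ j, w j * (if v j ≤ v i then 1 else 0)) = a i + b i := by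
    intro i
    rw [ha, hb, ← Finset.sum_add_distrib]
    refine Finset.sum_congr rfl (fun j _ => ?_)
    rcases lt_trichotomy (v j) (v i) with h | h | h
    · simp [h, h.le, h.ne]
    · simp [h]
    · simp [h, not_le.2 h, h.ne', not_lt.2 h.le]
  have hsum : ∑ i, (w i / W) * min (max (c i) 0) 1 = (min s W - min s 0) / W := by
    have h1 : ∀ i, (w i / W) * min (max (c i) 0) 1
        = ((w i / b i) * (min s (a i + b i) - min s (a i))) / W := by
      intro i
      rw [hc]
      rw [clamp_eq (a i) (b i) s (hbpos i)]
      field_simp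
    rw [Finset.sum_congr rfl (fun i _ => h1 i), ← Finset.sum_div]
    congr 1
    have := tele w hw v s Finset.univ
    rw [ha, hb]
    simp only [← hab]
    convert this using 2
    rename_i i _
    rw [hab i]
  rw [hsum]
  -- final: ofReal ((min s W - min s 0)/W) = ofReal (min t 1)
  rcases le_total 0 t with h | h
  · have hs0 : 0 ≤ s := by rw [hs]; positivity
    congr 1
    rw [min_eq_right hs0, sub_zero, hs]
    rcases le_total t 1 with h1 | h1
    · rw [min_eq_left h1, min_eq_left (show t * W ≤ W by nlinarith)]
      field_simp
    · rw [min_eq_right h1, min_eq_right (show W ≤ t * W by nlinarith), div_self hW.ne']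
  · have hs0 : s ≤ 0 := by rw [hs]; exact mul_nonpos_of_nonpos_of_nonneg h hW.le
    rw [min_eq_left hs0, min_eq_left (show s ≤ W by linarith), sub_self, zero_div,
      ENNReal.ofReal_zero]
    exact (ENNReal.ofReal_of_nonpos (by rw [min_eq_left (show t ≤ 1 by linarith)]; exact h)).symm
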